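/- Let $\{\xi(z):z\in\mathbb{Z}^d\}$ be i.i.d. with $P(\xi(0)>x)=e^{-x^\gamma}$, $x\ge0$, $0<\gamma\le1$, and let $M_n^{(k)}$ be the $(k+1)$st largest value of $\xi$ over the $\ell^1$-ball of radius $n$. Fix $0<\rho_1<\rho_2<1$ and set $k_n=\lfloor n^{\rho_1}\rfloor$, $m_n=\lfloor n^{\rho_2}\rfloor$. Then there is a constant $c>0$ such that almost surely, eventually for all $n$: (i) $M_n^{(0)}-M_n^{(k_n)}\ge c(\log n)^{1/\gamma}$ and (ii) $M_n^{(k_n)}-M_n^{(m_n)}\ge c(\log n)^{1/\gamma}$. -/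

import Mathlib

open MeasureTheory ProbabilityTheory Filter
open scoped Classical ENNReal

/-- The ℓ¹-ball of radius `n` in `ℤᵈ`, as a finite set. -/
noncomputable def latticeBall (d n : ℕ) : Finset (Fin d → ℤ) :=
  (Finset.Icc (fun _ => -(n : ℤ)) (fun _ => (n : ℤ))).filter
    (fun z => ∑ j, (z j).natAbs ≤ n)


lemma latticeBall_card_le (d n : ℕ) : (latticeBall d n).card ≤ (2*n+1)^d := by
  calc (latticeBall d n).card
      ≤ (Finset.Icc (fun _ : Fin d => -(n : ℤ)) (fun _ => (n : ℤ))).card :=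
        Finset.card_le_card (Finset.filter_subset _ _)
    _ = (2*n+1)^d := by
        rw [Pi.card_Icc]
        simp only [Int.card_Icc]
        rw [Finset.prod_const, Finset.card_univ, Fintype.card_fin]
        congr 1
        omega

lemma latticeBall_card_ge (d n : ℕ) (hd : 1 ≤ d) :
    (n/d + 1)^d ≤ (latticeBall d n).card := by
  have hsub : Finset.Icc (fun _ : Fin d => (0:ℤ)) (fun _ => ((n/d : ℕ) : ℤ)) ⊆ latticeBall d n := by
    intro z hz
    rw [Finset.mem_Icc] at hz
    obtain ⟨h0, h1⟩ := hz
    have h0' : ∀ j, (0:ℤ) ≤ z j := fun j => h0 j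
    have h1' : ∀ j, z j ≤ ((n/d : ℕ) : ℤ) := fun j => h1 j
    have habs : ∀ j, (z j).natAbs ≤ n/d := by
      intro j
      have : ((z j).natAbs : ℤ) ≤ ((n/d : ℕ) : ℤ) := by
        rw [Int.natAbs_of_nonneg (h0' j)]; exact h1' j
      exact_mod_cast this
    rw [latticeBall, Finset.mem_filter]
    constructor
    · rw [Finset.mem_Icc]
      constructor
      · intro j
        show -(n:ℤ) ≤ z j
        have := h0' j
        omega
      · intro j
        show z j ≤ (n:ℤ)
        have h2 : z j ≤ ((n/d : ℕ) : ℤ) := h1' j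
        have h3 : ((n/d : ℕ) : ℤ) ≤ (n : ℤ) := by exact_mod_cast Nat.div_le_self n d
        omega
    · calc ∑ j, (z j).natAbs ≤ ∑ _j : Fin d, n/d := Finset.sum_le_sum (fun j _ => habs j)
        _ = d * (n/d) := by rw [Finset.sum_const, Finset.card_univ, Fintype.card_fin, smul_eq_mul]
        _ ≤ n := by
            rw [mul_comm]
            exact Nat.div_mul_le_self n d
  calc (n/d + 1)^d
      = (Finset.Icc (fun _ : Fin d => (0:ℤ)) (fun _ => ((n/d : ℕ) : ℤ))).card := by
        rw [Pi.card_Icc]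
        simp only [Int.card_Icc]
        rw [Finset.prod_const, Finset.card_univ, Fintype.card_fin]
        congr 1
    _ ≤ _ := Finset.card_le_card hsub

lemma latticeBall_card_pos (d n : ℕ) (hd : 1 ≤ d) : 0 < (latticeBall d n).card :=
  lt_of_lt_of_le (Nat.pow_pos (n := d) (Nat.succ_le_iff.mp (Nat.le_add_left 1 (n/d))))
    (latticeBall_card_ge d n hd)

lemma latticeBall_card_real_ge (d n : ℕ) (hd : 1 ≤ d) :
    ((n:ℝ)/d)^d ≤ ((latticeBall d n).card : ℝ) := by
  have hlt : n < d * (n/d + 1) := by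
    have h1 := Nat.div_add_mod n d
    have h2 : n % d < d := Nat.mod_lt n (by omega)
    have h3 : d * (n/d+1) = d * (n/d) + d := by ring
    omega
  have h1 : (n:ℝ)/d ≤ ((n/d : ℕ) : ℝ) + 1 := by
    rw [div_le_iff₀ (by positivity : (0:ℝ) < (d:ℝ))]
    have : (n:ℝ) < (d : ℝ) * ((n/d : ℕ) + 1) := by exact_mod_cast hlt
    nlinarith
  calc ((n:ℝ)/d)^d ≤ (((n/d : ℕ) : ℝ) + 1)^d := by
        apply pow_le_pow_left₀ (by positivity) h1
    _ = (((n/d + 1 : ℕ)) : ℝ)^d := by push_cast; ring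
    _ ≤ ((latticeBall d n).card : ℝ) := by
        exact_mod_cast Nat.pow_le_pow_left (le_refl _) d |>.trans (latticeBall_card_ge d n hd)

section Prob

variable {Ω : Type*} [MeasureSpace Ω] [IsProbabilityMeasure (ℙ : Measure Ω)]
  {d : ℕ} {γ : ℝ} {ξ : (Fin d → ℤ) → Ω → ℝ}

lemma meas_inter_gt (hindep : iIndepFun ξ ℙ)
    (hdist : ∀ z, ∀ x : ℝ, 0 ≤ x → ℙ {ω | x < ξ z ω} = ENNReal.ofReal (Real.exp (-(x ^ γ))))
    (S : Finset (Fin d → ℤ)) {x : ℝ} (hx : 0 ≤ x) :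
    ℙ (⋂ z ∈ S, {ω | x < ξ z ω}) = ENNReal.ofReal (Real.exp (-(x ^ γ))) ^ S.card := by
  rw [hindep.meas_biInter (s := fun z => {ω | x < ξ z ω}) (fun z _ => ⟨Set.Ioi x, measurableSet_Ioi, rfl⟩)]
  rw [Finset.prod_congr rfl (fun z _ => hdist z x hx), Finset.prod_const]

lemma meas_inter_le (hmeas : ∀ z, Measurable (ξ z))
    (hindep : iIndepFun ξ ℙ)
    (hdist : ∀ z, ∀ x : ℝ, 0 ≤ x → ℙ {ω | x < ξ z ω} = ENNReal.ofReal (Real.exp (-(x ^ γ))))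
    (S : Finset (Fin d → ℤ)) {x : ℝ} (hx : 0 ≤ x) :
    ℙ (⋂ z ∈ S, {ω | ξ z ω ≤ x}) = ENNReal.ofReal (1 - Real.exp (-(x ^ γ))) ^ S.card := by
  rw [hindep.meas_biInter (s := fun z => {ω | ξ z ω ≤ x}) (fun z _ => ⟨Set.Iic x, measurableSet_Iic, rfl⟩)]
  have hone : ∀ z : Fin d → ℤ, ℙ {ω | ξ z ω ≤ x} = ENNReal.ofReal (1 - Real.exp (-(x ^ γ))) := by
    intro z
    have hc : {ω | ξ z ω ≤ x} = {ω | x < ξ z ω}ᶜ := by ext ω; simp [not_lt]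
    rw [hc, prob_compl_eq_one_sub (s := {ω | x < ξ z ω}) ((hmeas z) measurableSet_Ioi), hdist z x hx,
      ENNReal.ofReal_sub 1 (Real.exp_nonneg _), ENNReal.ofReal_one]
  rw [Finset.prod_congr rfl (fun z _ => hone z), Finset.prod_const]

lemma meas_count_ge_le (hindep : iIndepFun ξ ℙ)
    (hdist : ∀ z, ∀ x : ℝ, 0 ≤ x → ℙ {ω | x < ξ z ω} = ENNReal.ofReal (Real.exp (-(x ^ γ))))
    (n j : ℕ) {x : ℝ} (hx : 0 ≤ x) :
    ℙ {ω | j ≤ ((latticeBall d n).filter (fun z => x < ξ z ω)).card}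
      ≤ ((latticeBall d n).card.choose j : ℝ≥0∞) * ENNReal.ofReal (Real.exp (-(x ^ γ))) ^ j := by
  classical
  set S := latticeBall d n with hS
  have hsub : {ω | j ≤ (S.filter (fun z => x < ξ z ω)).card} ⊆
      ⋃ T ∈ S.powersetCard j, ⋂ z ∈ T, {ω | x < ξ z ω} := by
    intro ω hω
    obtain ⟨T, hTsub, hTcard⟩ := Finset.exists_subset_card_eq hω
    refine Set.mem_biUnion (Finset.mem_powersetCard.mpr
      ⟨hTsub.trans (Finset.filter_subset _ _), hTcard⟩) ?_
    exact Set.mem_biInter fun z hz => (Finset.mem_filter.mp (hTsub hz)).2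
  calc ℙ {ω | j ≤ (S.filter (fun z => x < ξ z ω)).card}
      ≤ ℙ (⋃ T ∈ S.powersetCard j, ⋂ z ∈ T, {ω | x < ξ z ω}) := measure_mono hsub
    _ ≤ ∑ T ∈ S.powersetCard j, ℙ (⋂ z ∈ T, {ω | x < ξ z ω}) :=
        measure_biUnion_finset_le _ _
    _ = ∑ _T ∈ S.powersetCard j, ENNReal.ofReal (Real.exp (-(x ^ γ))) ^ j := by
        refine Finset.sum_congr rfl (fun T hT => ?_)
        rw [meas_inter_gt hindep hdist T hx, (Finset.mem_powersetCard.mp hT).2]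
    _ = (S.card.choose j : ℝ≥0∞) * ENNReal.ofReal (Real.exp (-(x ^ γ))) ^ j := by
        rw [Finset.sum_const, Finset.card_powersetCard, nsmul_eq_mul]

lemma meas_count_le_le (hmeas : ∀ z, Measurable (ξ z))
    (hindep : iIndepFun ξ ℙ)
    (hdist : ∀ z, ∀ x : ℝ, 0 ≤ x → ℙ {ω | x < ξ z ω} = ENNReal.ofReal (Real.exp (-(x ^ γ))))
    (n k : ℕ) {x : ℝ} (hx : 0 ≤ x) :
    ℙ {ω | ((latticeBall d n).filter (fun z => x < ξ z ω)).card ≤ k}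
      ≤ ((latticeBall d n).card.choose ((latticeBall d n).card - k) : ℝ≥0∞)
        * ENNReal.ofReal (1 - Real.exp (-(x ^ γ))) ^ ((latticeBall d n).card - k) := by
  classical
  set S := latticeBall d n with hS
  set m := S.card - k with hm
  have hsub : {ω | (S.filter (fun z => x < ξ z ω)).card ≤ k} ⊆
      ⋃ T ∈ S.powersetCard m, ⋂ z ∈ T, {ω | ξ z ω ≤ x} := by
    intro ω hω
    have hcards := Finset.card_filter_add_card_filter_not
      (s := S) (p := fun z => x < ξ z ω)
    have hG : m ≤ (S.filter (fun z => ¬ x < ξ z ω)).card := by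
      simp only [Set.mem_setOf_eq] at hω
      omega
    obtain ⟨T, hTsub, hTcard⟩ := Finset.exists_subset_card_eq hG
    refine Set.mem_biUnion (Finset.mem_powersetCard.mpr
      ⟨hTsub.trans (Finset.filter_subset _ _), hTcard⟩) ?_
    exact Set.mem_biInter fun z hz => not_lt.mp (Finset.mem_filter.mp (hTsub hz)).2
  calc ℙ {ω | (S.filter (fun z => x < ξ z ω)).card ≤ k}
      ≤ ℙ (⋃ T ∈ S.powersetCard m, ⋂ z ∈ T, {ω | ξ z ω ≤ x}) := measure_mono hsub
    _ ≤ ∑ T ∈ S.powersetCard m, ℙ (⋂ z ∈ T, {ω | ξ z ω ≤ x}) :=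
        measure_biUnion_finset_le _ _
    _ = ∑ _T ∈ S.powersetCard m, ENNReal.ofReal (1 - Real.exp (-(x ^ γ))) ^ m := by
        refine Finset.sum_congr rfl (fun T hT => ?_)
        rw [meas_inter_le hmeas hindep hdist T hx, (Finset.mem_powersetCard.mp hT).2]
    _ = _ := by rw [Finset.sum_const, Finset.card_powersetCard, nsmul_eq_mul]

lemma borel_cantelli_sq {A : ℕ → Set Ω}
    (h : ∀ᶠ n : ℕ in atTop, ℙ (A n) ≤ ENNReal.ofReal (((n:ℝ)^2)⁻¹)) :
    ∀ᵐ ω ∂ℙ, ∀ᶠ n : ℕ in atTop, ω ∉ A n := by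
  apply ae_eventually_notMem
  obtain ⟨N, hN⟩ := eventually_atTop.mp h
  set g : ℕ → ℝ := fun n => ((n:ℝ)^2)⁻¹ + (if n < N then 1 else 0) with hg
  have hgsum : Summable g := by
    apply Summable.add
    · have := Real.summable_one_div_nat_pow.mpr (le_refl 2)
      simpa [one_div] using this
    · apply summable_of_ne_finset_zero (s := Finset.range N)
      intro n hn
      simp [Finset.mem_range] at hn
      simp [hn]
  have hbound : ∀ n, ℙ (A n) ≤ ENNReal.ofReal (g n) := by
    intro n
    by_cases hc : n < N
    · calc ℙ (A n) ≤ 1 := prob_le_one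
        _ ≤ ENNReal.ofReal (g n) := by
          rw [hg]
          simp only [hc, if_true]
          rw [← ENNReal.ofReal_one]
          apply ENNReal.ofReal_le_ofReal
          have : (0:ℝ) ≤ ((n:ℝ)^2)⁻¹ := by positivity
          linarith
    · calc ℙ (A n) ≤ ENNReal.ofReal (((n:ℝ)^2)⁻¹) := hN n (by omega)
        _ ≤ ENNReal.ofReal (g n) := by
          apply ENNReal.ofReal_le_ofReal
          simp only [hg, hc, if_false]
          simp
  have h1 : ∑' n, ℙ (A n) ≤ ENNReal.ofReal (∑' n, g n) := by
    calc ∑' n, ℙ (A n) ≤ ∑' n, ENNReal.ofReal (g n) := ENNReal.tsum_le_tsum hbound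
      _ = ENNReal.ofReal (∑' n, g n) :=
          (ENNReal.ofReal_tsum_of_nonneg (fun n => by positivity) hgsum).symm
  exact ne_top_of_le_ne_top ENNReal.ofReal_ne_top h1

end Prob
lemma ev_log_le (C : ℝ) {ε : ℝ} (hε : 0 < ε) :
    ∀ᶠ n : ℕ in atTop, C * Real.log n ≤ (n:ℝ)^ε := by
  have hb : (0:ℝ) < 1 / (max C 1) := by
    have : (0:ℝ) < max C 1 := lt_max_of_lt_right one_pos
    positivity
  have h := (isLittleO_log_rpow_atTop hε).def hb
  have h2 := tendsto_natCast_atTop_atTop (R := ℝ) |>.eventually h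
  filter_upwards [h2, eventually_ge_atTop 1] with n hn hn1
  have hn1' : (1:ℝ) ≤ (n:ℝ) := by exact_mod_cast hn1
  have hlog : 0 ≤ Real.log n := Real.log_nonneg hn1'
  have hrp : 0 ≤ (n:ℝ)^ε := Real.rpow_nonneg (by positivity) ε
  rw [Real.norm_eq_abs, Real.norm_eq_abs, abs_of_nonneg hlog, abs_of_nonneg hrp] at hn
  have hCmax : C ≤ max C 1 := le_max_left _ _
  have hmaxpos : (0:ℝ) < max C 1 := lt_max_of_lt_right one_pos
  calc C * Real.log n ≤ max C 1 * Real.log n := mul_le_mul_of_nonneg_right hCmax hlog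
    _ ≤ max C 1 * (1 / max C 1 * (n:ℝ)^ε) := mul_le_mul_of_nonneg_left hn hmaxpos.le
    _ = (n:ℝ)^ε := by field_simp

lemma ev_rpow_ge (C : ℝ) {ε : ℝ} (hε : 0 < ε) :
    ∀ᶠ n : ℕ in atTop, C ≤ (n:ℝ)^ε := by
  have h := (tendsto_rpow_atTop hε).comp (tendsto_natCast_atTop_atTop (R := ℝ))
  exact h.eventually_ge_atTop C

lemma pow_le_exp_mul_factorial (j : ℕ) : (j:ℝ)^j ≤ Real.exp j * (j.factorial : ℝ) := by
  have h := Real.sum_le_exp_of_nonneg (x := (j:ℝ)) (Nat.cast_nonneg j) (j+1)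
  have hterm : (j:ℝ)^j / (j.factorial : ℝ) ≤ Real.exp j := by
    refine le_trans ?_ h
    have := Finset.single_le_sum (f := fun i => (j:ℝ)^i / (i.factorial : ℝ))
      (fun i _ => by positivity) (Finset.self_mem_range_succ j)
    simpa using this
  have hfac : (0:ℝ) < (j.factorial : ℝ) := by exact_mod_cast j.factorial_pos
  calc (j:ℝ)^j = ((j:ℝ)^j / (j.factorial:ℝ)) * (j.factorial:ℝ) := by field_simp
    _ ≤ Real.exp j * (j.factorial:ℝ) := mul_le_mul_of_nonneg_right hterm hfac.le

lemma Mk_ge_of_count {ι : Type*} [DecidableEq ι] (S : Finset ι) (f : ι → ℝ) (M x : ℝ) (k : ℕ)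
    (hz : ∃ z ∈ S, f z = M) (hF : (S.filter (fun z => M ≤ f z)).card = k + 1)
    (hcount : k + 1 ≤ (S.filter (fun z => x < f z)).card) : x ≤ M := by
  by_contra hcon
  push_neg at hcon
  have hsub : S.filter (fun z => x < f z) ⊆ S.filter (fun z => M ≤ f z) := by
    intro z hzmem
    rw [Finset.mem_filter] at hzmem ⊢
    exact ⟨hzmem.1, le_of_lt (hcon.trans hzmem.2)⟩
  have heq := Finset.eq_of_subset_of_card_le hsub (by omega)
  obtain ⟨z₀, hz₀S, hz₀⟩ := hz
  have hz₀F : z₀ ∈ S.filter (fun z => M ≤ f z) := Finset.mem_filter.mpr ⟨hz₀S, le_of_eq hz₀.symm⟩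
  rw [← heq] at hz₀F
  have := (Finset.mem_filter.mp hz₀F).2
  rw [hz₀] at this
  exact absurd this (not_lt.mpr hcon.le)

lemma Mk_le_of_count {ι : Type*} [DecidableEq ι] (S : Finset ι) (f : ι → ℝ) (M x : ℝ) (k : ℕ)
    (hF : (S.filter (fun z => M ≤ f z)).card = k + 1)
    (hcount : (S.filter (fun z => x < f z)).card ≤ k) : M ≤ x := by
  by_contra hcon
  push_neg at hcon
  have hsub : S.filter (fun z => M ≤ f z) ⊆ S.filter (fun z => x < f z) := by
    intro z hzmem
    rw [Finset.mem_filter] at hzmem ⊢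
    exact ⟨hzmem.1, lt_of_lt_of_le hcon hzmem.2⟩
  have := Finset.card_le_card hsub
  omega

section Est

variable {Ω : Type*} [MeasureSpace Ω] [IsProbabilityMeasure (ℙ : Measure Ω)]
  {d : ℕ} {γ : ℝ} {ξ : (Fin d → ℤ) → Ω → ℝ}

set_option maxHeartbeats 1000000 in
lemma as_upper (hγ : 0 < γ) (hd : 1 ≤ d)
    (hindep : iIndepFun ξ ℙ)
    (hdist : ∀ z, ∀ x : ℝ, 0 ≤ x → ℙ {ω | x < ξ z ω} = ENNReal.ofReal (Real.exp (-(x ^ γ))))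
    {b ρ : ℝ} (hb : 0 < b) (hρ : 0 < ρ) (hbd : (d:ℝ) - b < ρ)
    (κ : ℕ → ℕ) (hκ : ∀ᶠ n : ℕ in atTop, (n:ℝ)^ρ ≤ (κ n : ℝ) + 1) :
    ∀ᵐ ω ∂ℙ, ∀ᶠ n : ℕ in atTop,
      ((latticeBall d n).filter (fun z => (b * Real.log n) ^ (1/γ) < ξ z ω)).card ≤ κ n := by
  have hbc := borel_cantelli_sq (A := fun n =>
    {ω | κ n + 1 ≤ ((latticeBall d n).filter (fun z => (b * Real.log n) ^ (1/γ) < ξ z ω)).card}) ?_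
  · filter_upwards [hbc] with ω hω
    filter_upwards [hω] with n hn
    simp only [Set.mem_setOf_eq, not_le] at hn
    omega
  have hε : 0 < b + ρ - (d:ℝ) := by linarith
  filter_upwards [ev_rpow_ge (2 * Real.exp 1 * 3^d) hε, ev_log_le (2 / Real.log 2) hρ,
    hκ, eventually_ge_atTop 1] with n hn1 hn2 hnκ hn3
  have hn1R : (1:ℝ) ≤ (n:ℝ) := by exact_mod_cast hn3
  have hnp0 : (0:ℝ) < (n:ℝ) := by linarith
  have hL : 0 ≤ Real.log n := Real.log_nonneg hn1R
  have hxnn : 0 ≤ b * Real.log n := mul_nonneg hb.le hL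
  have hx : 0 ≤ (b * Real.log n) ^ (1/γ) := Real.rpow_nonneg hxnn _
  have hxγ : ((b * Real.log n) ^ (1/γ)) ^ γ = b * Real.log n := by
    rw [← Real.rpow_mul hxnn, one_div, inv_mul_cancel₀ (ne_of_gt hγ), Real.rpow_one]
  have hU := meas_count_ge_le hindep hdist n (κ n + 1) hx
  set N := (latticeBall d n).card with hNdef
  set j := κ n + 1 with hjdef
  set p := Real.exp (-(((b * Real.log n) ^ (1/γ)) ^ γ)) with hpdef
  refine le_trans hU ?_
  have hcast : ((N.choose j : ℝ≥0∞)) * ENNReal.ofReal p ^ j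
      = ENNReal.ofReal ((N.choose j : ℝ) * p ^ j) := by
    rw [ENNReal.ofReal_mul (by positivity), ENNReal.ofReal_pow (Real.exp_nonneg _),
      ENNReal.ofReal_natCast]
  rw [hcast]
  apply ENNReal.ofReal_le_ofReal
  -- now a real inequality
  have hppos : 0 < p := Real.exp_pos _
  have hp : p = (n:ℝ) ^ (-b) := by
    rw [hpdef, hxγ, Real.rpow_def_of_pos hnp0]
    ring_nf
  have hjR : (n:ℝ)^ρ ≤ (j:ℝ) := by
    rw [hjdef]; push_cast; exact hnκ
  have hjpos : (0:ℝ) < (j:ℝ) := lt_of_lt_of_le (Real.rpow_pos_of_pos hnp0 ρ) hjR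
  have hNle : (N:ℝ) ≤ ((3:ℝ)*n)^d := by
    have h1 : N ≤ (2*n+1)^d := latticeBall_card_le d n
    have h2 : (2*n+1)^d ≤ (3*n)^d := Nat.pow_le_pow_left (by omega) d
    calc (N:ℝ) ≤ (((3*n)^d : ℕ) : ℝ) := by exact_mod_cast le_trans h1 h2
      _ = ((3:ℝ)*n)^d := by push_cast; ring
  set Q := (N:ℝ) * p * Real.exp 1 / (j:ℝ) with hQdef
  have hfac : (0:ℝ) < (j.factorial : ℝ) := by exact_mod_cast j.factorial_pos
  have hQ1 : (N.choose j : ℝ) * p ^ j ≤ Q ^ j := by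
    have h1 : (N.choose j : ℝ) ≤ (N:ℝ)^j / (j.factorial : ℝ) := Nat.choose_le_pow_div j N
    have h2 : ((j:ℝ))^j ≤ Real.exp 1 ^ j * (j.factorial : ℝ) := by
      have h3 := pow_le_exp_mul_factorial j
      have h4 : Real.exp (j:ℝ) = Real.exp 1 ^ j := by
        rw [← Real.exp_nat_mul, mul_one]
      rwa [h4] at h3
    have h3 : 1/(j.factorial:ℝ) ≤ Real.exp 1 ^ j / (j:ℝ)^j := by
      rw [div_le_div_iff₀ hfac (by positivity)]
      calc 1 * (j:ℝ)^j = (j:ℝ)^j := one_mul _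
        _ ≤ Real.exp 1 ^ j * (j.factorial : ℝ) := h2
    calc (N.choose j:ℝ) * p^j ≤ ((N:ℝ)^j / (j.factorial:ℝ)) * p^j :=
          mul_le_mul_of_nonneg_right h1 (by positivity)
      _ = ((N:ℝ)^j * p^j) * (1/(j.factorial:ℝ)) := by ring
      _ ≤ ((N:ℝ)^j * p^j) * (Real.exp 1 ^ j / (j:ℝ)^j) :=
          mul_le_mul_of_nonneg_left h3 (by positivity)
      _ = Q^j := by rw [hQdef]; rw [div_pow, mul_pow, mul_pow]; ring
  have hQhalf : Q ≤ 1/2 := by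
    have hNp : (N:ℝ) * p ≤ (3:ℝ)^d * (n:ℝ)^((d:ℝ)-b) := by
      rw [hp]
      calc (N:ℝ) * (n:ℝ)^(-b) ≤ ((3:ℝ)*n)^d * (n:ℝ)^(-b) :=
            mul_le_mul_of_nonneg_right hNle (Real.rpow_nonneg hnp0.le _)
        _ = (3:ℝ)^d * ((n:ℝ)^(d:ℕ) * (n:ℝ)^(-b)) := by rw [mul_pow]; ring
        _ = (3:ℝ)^d * (n:ℝ)^((d:ℝ)-b) := by
            rw [← Real.rpow_natCast (n:ℝ) d, ← Real.rpow_add hnp0]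
            ring_nf
    have h1j : 1/(j:ℝ) ≤ (n:ℝ)^(-ρ) := by
      rw [Real.rpow_neg hnp0.le, ← one_div]
      exact one_div_le_one_div_of_le (Real.rpow_pos_of_pos hnp0 ρ) hjR
    have hεpos : (0:ℝ) < (n:ℝ)^(b+ρ-(d:ℝ)) := Real.rpow_pos_of_pos hnp0 _
    calc Q = ((N:ℝ)*p) * Real.exp 1 * (1/(j:ℝ)) := by rw [hQdef]; ring
      _ ≤ ((3:ℝ)^d * (n:ℝ)^((d:ℝ)-b)) * Real.exp 1 * ((n:ℝ)^(-ρ)) := by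
          apply mul_le_mul
          · exact mul_le_mul_of_nonneg_right hNp (Real.exp_nonneg 1)
          · exact h1j
          · positivity
          · positivity
      _ = Real.exp 1 * 3^d * (n:ℝ)^((d:ℝ)-b-ρ) := by
          rw [show (d:ℝ)-b-ρ = ((d:ℝ)-b) + (-ρ) by ring, Real.rpow_add hnp0]
          ring
      _ ≤ 1/2 := by
          rw [show (d:ℝ)-b-ρ = -(b+ρ-(d:ℝ)) by ring, Real.rpow_neg hnp0.le]
          nlinarith [mul_le_mul_of_nonneg_right hn1
              (inv_nonneg.mpr hεpos.le : (0:ℝ) ≤ ((n:ℝ)^(b+ρ-(d:ℝ)))⁻¹),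
            mul_inv_cancel₀ (ne_of_gt hεpos), Real.exp_pos 1,
            pow_pos (by norm_num : (0:ℝ) < 3) d]
  have hQnn : 0 ≤ Q := by positivity
  have hlog2 : (0:ℝ) < Real.log 2 := Real.log_pos (by norm_num)
  have h2L : 2 * Real.log n ≤ Real.log 2 * (n:ℝ)^ρ := by
    have := mul_le_mul_of_nonneg_right hn2 hlog2.le
    calc 2 * Real.log n = (2 / Real.log 2) * Real.log n * Real.log 2 := by field_simp
      _ ≤ (n:ℝ)^ρ * Real.log 2 := this
      _ = Real.log 2 * (n:ℝ)^ρ := mul_comm _ _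
  calc (N.choose j : ℝ) * p ^ j ≤ Q ^ j := hQ1
    _ ≤ (1/2:ℝ) ^ j := pow_le_pow_left₀ hQnn hQhalf j
    _ = (1/2:ℝ) ^ ((j:ℕ):ℝ) := by rw [Real.rpow_natCast]
    _ ≤ (1/2:ℝ) ^ ((n:ℝ)^ρ) :=
        Real.rpow_le_rpow_of_exponent_ge (by norm_num) (by norm_num) hjR
    _ ≤ ((n:ℝ)^2)⁻¹ := by
        rw [Real.rpow_def_of_pos (by norm_num : (0:ℝ) < 1/2)]
        have hlog12 : Real.log (1/2) = -Real.log 2 := by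
          rw [one_div, Real.log_inv]
        rw [hlog12]
        have hn2inv : ((n:ℝ)^2)⁻¹ = Real.exp (-(2 * Real.log n)) := by
          rw [Real.exp_neg]
          congr 1
          rw [show (2:ℝ) * Real.log n = Real.log n + Real.log n by ring, Real.exp_add,
            Real.exp_log hnp0]
          ring
        rw [hn2inv]
        apply Real.exp_le_exp.mpr
        nlinarith

set_option maxHeartbeats 1000000 in
lemma as_lower (hγ : 0 < γ) (hd : 1 ≤ d)
    (hmeas : ∀ z, Measurable (ξ z))
    (hindep : iIndepFun ξ ℙ)
    (hdist : ∀ z, ∀ x : ℝ, 0 ≤ x → ℙ {ω | x < ξ z ω} = ENNReal.ofReal (Real.exp (-(x ^ γ))))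
    {a σ : ℝ} (ha : 0 < a) (hσ : 0 ≤ σ) (haσ : σ < (d:ℝ) - a)
    (κ : ℕ → ℕ) (hκ : ∀ᶠ n : ℕ in atTop, (κ n : ℝ) ≤ (n:ℝ)^σ) :
    ∀ᵐ ω ∂ℙ, ∀ᶠ n : ℕ in atTop,
      κ n + 1 ≤ ((latticeBall d n).filter (fun z => (a * Real.log n) ^ (1/γ) < ξ z ω)).card := by
  have hbc := borel_cantelli_sq (A := fun n =>
    {ω | ((latticeBall d n).filter (fun z => (a * Real.log n) ^ (1/γ) < ξ z ω)).card ≤ κ n}) ?_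
  · filter_upwards [hbc] with ω hω
    filter_upwards [hω] with n hn
    simp only [Set.mem_setOf_eq, not_le] at hn
    omega
  have hε1 : (0:ℝ) < (d:ℝ) - σ := by linarith
  have hε2 : (0:ℝ) < (d:ℝ) - a - σ := by linarith
  filter_upwards [ev_rpow_ge ((d:ℝ)^d) hε1, ev_log_le ((2*(d:ℝ)+3) * (d:ℝ)^d) hε2,
    hκ, eventually_ge_atTop 3] with n hn1 hn2 hnκ hn3
  have hn1N : 1 ≤ n := by omega
  have hn1R : (1:ℝ) ≤ (n:ℝ) := by exact_mod_cast hn1N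
  have hnp0 : (0:ℝ) < (n:ℝ) := by linarith
  have hdp0 : (0:ℝ) < (d:ℝ) := by exact_mod_cast hd
  have hL1 : 1 ≤ Real.log n := by
    have h3 : Real.exp 1 ≤ (3:ℝ) := by
      have := Real.exp_one_lt_d9
      linarith
    have hle : Real.exp 1 ≤ (n:ℝ) := le_trans h3 (by exact_mod_cast hn3)
    calc (1:ℝ) = Real.log (Real.exp 1) := (Real.log_exp 1).symm
      _ ≤ Real.log n := Real.log_le_log (Real.exp_pos 1) hle
  have hL : (0:ℝ) ≤ Real.log n := by linarith
  have hxnn : 0 ≤ a * Real.log n := mul_nonneg ha.le hL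
  have hx : 0 ≤ (a * Real.log n) ^ (1/γ) := Real.rpow_nonneg hxnn _
  have hxγ : ((a * Real.log n) ^ (1/γ)) ^ γ = a * Real.log n := by
    rw [← Real.rpow_mul hxnn, one_div, inv_mul_cancel₀ (ne_of_gt hγ), Real.rpow_one]
  have hU := meas_count_le_le hmeas hindep hdist n (κ n) hx
  set N := (latticeBall d n).card with hNdef
  set k := κ n with hkdef
  set p := Real.exp (-(((a * Real.log n) ^ (1/γ)) ^ γ)) with hpdef
  have hppos : 0 < p := Real.exp_pos _
  have hp1 : p ≤ 1 := by
    rw [hpdef, hxγ]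
    calc Real.exp (-(a * Real.log n)) ≤ Real.exp 0 := Real.exp_le_exp.mpr (by linarith)
      _ = 1 := Real.exp_zero
  have hp : p = (n:ℝ) ^ (-a) := by
    rw [hpdef, hxγ, Real.rpow_def_of_pos hnp0]
    ring_nf
  -- k ≤ N
  have hNreal : ((n:ℝ)/d)^d ≤ (N:ℝ) := latticeBall_card_real_ge d n hd
  have hkn : (k:ℝ) ≤ (n:ℝ)^σ := hnκ
  have hknN : (k:ℝ) ≤ (N:ℝ) := by
    have h1 : (n:ℝ)^σ * (d:ℝ)^d ≤ (n:ℝ)^σ * (n:ℝ)^((d:ℝ)-σ) :=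
      mul_le_mul_of_nonneg_left hn1 (Real.rpow_nonneg hnp0.le _)
    have h2 : (n:ℝ)^σ * (n:ℝ)^((d:ℝ)-σ) = (n:ℝ)^(d:ℕ) := by
      rw [← Real.rpow_add hnp0, ← Real.rpow_natCast (n:ℝ) d]
      ring_nf
    have h3 : (n:ℝ)^σ ≤ ((n:ℝ)/d)^d := by
      rw [div_pow]
      rw [le_div_iff₀ (by positivity)]
      calc (n:ℝ)^σ * (d:ℝ)^d ≤ (n:ℝ)^(d:ℕ) := by rw [← h2]; exact h1
        _ = (n:ℝ)^(d:ℕ) := rfl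
    linarith
  have hkN : k ≤ N := by exact_mod_cast hknN
  refine le_trans hU ?_
  have hcast : ((N.choose (N - k) : ℝ≥0∞)) * ENNReal.ofReal (1 - p) ^ (N - k)
      = ENNReal.ofReal ((N.choose (N - k) : ℝ) * (1 - p) ^ (N - k)) := by
    rw [ENNReal.ofReal_mul (by positivity), ENNReal.ofReal_pow (by linarith),
      ENNReal.ofReal_natCast]
  rw [hcast]
  apply ENNReal.ofReal_le_ofReal
  -- real inequality
  set m := N - k with hmdef
  have hmR : (m:ℝ) = (N:ℝ) - (k:ℝ) := by
    rw [hmdef]; push_cast [Nat.cast_sub hkN]; ring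
  have hNpos : 0 < N := latticeBall_card_pos d n hd
  have hNR1 : (1:ℝ) ≤ (N:ℝ) := by exact_mod_cast hNpos
  have hchoose : (N.choose m : ℝ) ≤ (N:ℝ)^k := by
    have h1 : N.choose (N - k) = N.choose k := Nat.choose_symm hkN
    rw [hmdef, h1]
    exact_mod_cast Nat.choose_le_pow N k
  have h1p : (1 - p)^m ≤ Real.exp (-(p * m)) := by
    have ha1 : 1 - p ≤ Real.exp (-p) := by
      have := Real.add_one_le_exp (-p)
      linarith
    have ha2 : (0:ℝ) ≤ 1 - p := by linarith
    calc (1 - p)^m ≤ (Real.exp (-p))^m := pow_le_pow_left₀ ha2 ha1 m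
      _ = Real.exp (-(p * m)) := by
          rw [← Real.exp_nat_mul]
          ring_nf
  have hNk : (N:ℝ)^k = Real.exp ((k:ℝ) * Real.log N) := by
    calc (N:ℝ)^k = (Real.exp (Real.log N))^k := by
          rw [Real.exp_log (show (0:ℝ) < (N:ℝ) by positivity)]
      _ = Real.exp ((k:ℝ) * Real.log N) := (Real.exp_nat_mul _ k).symm
  have hNle : (N:ℝ) ≤ ((3:ℝ)*n)^d := by
    have h1 : N ≤ (2*n+1)^d := latticeBall_card_le d n
    have h2 : (2*n+1)^d ≤ (3*n)^d := Nat.pow_le_pow_left (by omega) d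
    calc (N:ℝ) ≤ (((3*n)^d : ℕ) : ℝ) := by exact_mod_cast le_trans h1 h2
      _ = ((3:ℝ)*n)^d := by push_cast; ring
  have hlogN0 : 0 ≤ Real.log N := Real.log_nonneg hNR1
  have hlogN : Real.log N ≤ 2*(d:ℝ)*Real.log n := by
    have hlog1 : Real.log N ≤ Real.log (((3:ℝ)*n)^d) :=
      Real.log_le_log (by positivity) hNle
    rw [Real.log_pow] at hlog1
    have hlog2 : Real.log ((3:ℝ)*n) = Real.log 3 + Real.log n :=
      Real.log_mul (by norm_num) (ne_of_gt hnp0)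
    have hlog3 : Real.log 3 ≤ Real.log n :=
      Real.log_le_log (by norm_num) (by exact_mod_cast hn3)
    rw [hlog2] at hlog1
    nlinarith
  have hpN1 : (n:ℝ)^(-a) * (((n:ℝ)/d)^d) ≤ p * (N:ℝ) := by
    rw [hp]
    exact mul_le_mul_of_nonneg_left hNreal (Real.rpow_nonneg hnp0.le _)
  have hpN2 : (n:ℝ)^(-a) * (((n:ℝ)/d)^d) = (n:ℝ)^((d:ℝ)-a) / (d:ℝ)^d := by
    rw [div_pow, ← Real.rpow_natCast (n:ℝ) d, ← mul_div_assoc, ← Real.rpow_add hnp0,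
      show -a + (d:ℝ) = (d:ℝ) - a by ring]
  have hpN : (n:ℝ)^((d:ℝ)-a) / (d:ℝ)^d ≤ p * (N:ℝ) := by
    rw [← hpN2]; exact hpN1
  have hm1 : ((2*(d:ℝ)+3) * (d:ℝ)^d) * Real.log n * (n:ℝ)^σ
      ≤ (n:ℝ)^((d:ℝ)-a-σ) * (n:ℝ)^σ :=
    mul_le_mul_of_nonneg_right hn2 (Real.rpow_nonneg hnp0.le _)
  have hm2 : (n:ℝ)^((d:ℝ)-a-σ) * (n:ℝ)^σ = (n:ℝ)^((d:ℝ)-a) := by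
    rw [← Real.rpow_add hnp0]; ring_nf
  have hmain : (2*(d:ℝ)+3) * (n:ℝ)^σ * Real.log n ≤ (n:ℝ)^((d:ℝ)-a) / (d:ℝ)^d := by
    rw [le_div_iff₀ (by positivity : (0:ℝ) < (d:ℝ)^d)]
    rw [hm2] at hm1
    nlinarith
  have hnσ1 : (1:ℝ) ≤ (n:ℝ)^σ := Real.one_le_rpow hn1R hσ
  have hnσ0 : (0:ℝ) ≤ (n:ℝ)^σ := by linarith
  have t1 : (k:ℝ) * Real.log N ≤ (n:ℝ)^σ * (2*(d:ℝ)*Real.log n) :=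
    mul_le_mul hkn hlogN hlogN0 hnσ0
  have t2 : p * (k:ℝ) ≤ (n:ℝ)^σ :=
    le_trans (mul_le_of_le_one_left (Nat.cast_nonneg k) hp1) hkn
  have t3 : 2*Real.log n ≤ 2*((n:ℝ)^σ)*Real.log n := by nlinarith
  have t4 : (n:ℝ)^σ ≤ (n:ℝ)^σ * Real.log n := by nlinarith
  have hexo : (k:ℝ) * Real.log N - p * (m:ℝ) ≤ -(2 * Real.log n) := by
    have hpm : p * (m:ℝ) = p * (N:ℝ) - p * (k:ℝ) := by rw [hmR]; ring
    rw [hpm]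
    nlinarith
  calc (N.choose m : ℝ) * (1-p)^m
      ≤ (N:ℝ)^k * Real.exp (-(p * m)) :=
        mul_le_mul hchoose h1p (pow_nonneg (by linarith) m) (by positivity)
    _ = Real.exp ((k:ℝ) * Real.log N - p * m) := by
        rw [hNk, ← Real.exp_add]; ring_nf
    _ ≤ Real.exp (-(2 * Real.log n)) := Real.exp_le_exp.mpr hexo
    _ = ((n:ℝ)^2)⁻¹ := by
        rw [Real.exp_neg]
        congr 1
        rw [show (2:ℝ) * Real.log n = Real.log n + Real.log n by ring, Real.exp_add,
          Real.exp_log hnp0]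
        ring

end Est

set_option maxHeartbeats 1000000 in
theorem weibull_order_statistics_gaps
    {Ω : Type*} [MeasureSpace Ω] [IsProbabilityMeasure (ℙ : Measure Ω)]
    (d : ℕ) (hd : 1 ≤ d) (γ : ℝ) (hγ : γ ∈ Set.Ioc (0 : ℝ) 1)
    (ρ₁ ρ₂ : ℝ) (hρ₁ : 0 < ρ₁) (hρ₁₂ : ρ₁ < ρ₂) (hρ₂ : ρ₂ < 1)
    (ξ : (Fin d → ℤ) → Ω → ℝ) (hmeas : ∀ z, Measurable (ξ z))
    (hindep : iIndepFun ξ ℙ)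
    (hdist : ∀ z, ∀ x : ℝ, 0 ≤ x → ℙ {ω | x < ξ z ω} = ENNReal.ofReal (Real.exp (-(x ^ γ))))
    (Mk : ℕ → ℕ → Ω → ℝ)
    -- `Mk n k ω` is the `(k+1)`st largest value of the field on the ball of radius `n`:
    (hMk : ∀ᵐ ω ∂ℙ, ∀ᶠ n : ℕ in atTop, ∀ k ≤ ⌊(n : ℝ) ^ ρ₂⌋₊,
      (∃ z ∈ latticeBall d n, ξ z ω = Mk n k ω) ∧
      ((latticeBall d n).filter (fun z => Mk n k ω ≤ ξ z ω)).card = k + 1) :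
    ∃ c : ℝ, 0 < c ∧ ∀ᵐ ω ∂ℙ, ∀ᶠ n : ℕ in atTop,
      c * (Real.log n) ^ (1 / γ) ≤ Mk n 0 ω - Mk n ⌊(n : ℝ) ^ ρ₁⌋₊ ω ∧
      c * (Real.log n) ^ (1 / γ) ≤ Mk n ⌊(n : ℝ) ^ ρ₁⌋₊ ω - Mk n ⌊(n : ℝ) ^ ρ₂⌋₊ ω := by
  obtain ⟨hγ0, hγ1⟩ := hγ
  have hd1 : (1:ℝ) ≤ (d:ℝ) := by exact_mod_cast hd
  set δ := min ρ₁ (ρ₂ - ρ₁) / 4 with hδdef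
  have hδ : 0 < δ := by
    apply div_pos _ (by norm_num)
    exact lt_min hρ₁ (by linarith)
  have h4δ₁ : 4*δ ≤ ρ₁ := by
    have := min_le_left ρ₁ (ρ₂ - ρ₁); rw [hδdef]; linarith
  have h4δ₂ : 4*δ ≤ ρ₂ - ρ₁ := by
    have := min_le_right ρ₁ (ρ₂ - ρ₁); rw [hδdef]; linarith
  set a0 := (d:ℝ) - δ with ha0def
  set a1 := (d:ℝ) - ρ₁ - δ with ha1def
  set b1 := (d:ℝ) - ρ₁ + δ with hb1def
  set b2 := (d:ℝ) - ρ₂ + δ with hb2def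
  have ha0 : 0 < a0 := by rw [ha0def]; linarith
  have ha1 : 0 < a1 := by rw [ha1def]; linarith
  have hb1 : 0 < b1 := by rw [hb1def]; linarith
  have hb2 : 0 < b2 := by rw [hb2def]; linarith
  have hb1a0 : b1 < a0 := by rw [hb1def, ha0def]; linarith
  have hb2a1 : b2 < a1 := by rw [hb2def, ha1def]; linarith
  have hinv : (0:ℝ) < 1/γ := by positivity
  set c := min (a0^(1/γ) - b1^(1/γ)) (a1^(1/γ) - b2^(1/γ)) with hcdef
  have hc : 0 < c := by
    apply lt_min
    · exact sub_pos.mpr (Real.rpow_lt_rpow hb1.le hb1a0 hinv)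
    · exact sub_pos.mpr (Real.rpow_lt_rpow hb2.le hb2a1 hinv)
  refine ⟨c, hc, ?_⟩
  have E0 := as_lower (ξ := ξ) hγ0 hd hmeas hindep hdist (a := a0) (σ := δ/2) ha0
    (by linarith) (by rw [ha0def]; linarith) (fun _ => 0)
    (Filter.Eventually.of_forall (fun n => by simpa using Real.rpow_nonneg (Nat.cast_nonneg n) (δ/2)))
  have E1l := as_lower (ξ := ξ) hγ0 hd hmeas hindep hdist (a := a1) (σ := ρ₁) ha1
    hρ₁.le (by rw [ha1def]; linarith) (fun n => ⌊(n:ℝ)^ρ₁⌋₊)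
    (Filter.Eventually.of_forall (fun n => Nat.floor_le (Real.rpow_nonneg (Nat.cast_nonneg n) _)))
  have E1u := as_upper (ξ := ξ) hγ0 hd hindep hdist (b := b1) (ρ := ρ₁) hb1 hρ₁
    (by rw [hb1def]; linarith) (fun n => ⌊(n:ℝ)^ρ₁⌋₊)
    (Filter.Eventually.of_forall (fun n => (Nat.lt_floor_add_one _).le))
  have E2u := as_upper (ξ := ξ) hγ0 hd hindep hdist (b := b2) (ρ := ρ₂) hb2
    (lt_trans hρ₁ hρ₁₂) (by rw [hb2def]; linarith) (fun n => ⌊(n:ℝ)^ρ₂⌋₊)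
    (Filter.Eventually.of_forall (fun n => (Nat.lt_floor_add_one _).le))
  filter_upwards [hMk, E0, E1l, E1u, E2u] with ω hω hE0 hE1l hE1u hE2u
  filter_upwards [hω, hE0, hE1l, hE1u, hE2u, eventually_ge_atTop 1]
    with n hωn h0 h1l h1u h2u hn1
  have hn1R : (1:ℝ) ≤ (n:ℝ) := by exact_mod_cast hn1
  have hL : 0 ≤ Real.log n := Real.log_nonneg hn1R
  have hk12 : ⌊(n:ℝ)^ρ₁⌋₊ ≤ ⌊(n:ℝ)^ρ₂⌋₊ :=
    Nat.floor_le_floor (Real.rpow_le_rpow_of_exponent_le hn1R hρ₁₂.le)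
  obtain ⟨hz0, hF0⟩ := hωn 0 (Nat.zero_le _)
  obtain ⟨hz1, hF1⟩ := hωn _ hk12
  obtain ⟨hz2, hF2⟩ := hωn _ (le_refl _)
  have hM0 : (a0 * Real.log n)^(1/γ) ≤ Mk n 0 ω :=
    Mk_ge_of_count _ _ _ _ 0 hz0 hF0 h0
  have hM1l : (a1 * Real.log n)^(1/γ) ≤ Mk n ⌊(n:ℝ)^ρ₁⌋₊ ω :=
    Mk_ge_of_count _ _ _ _ _ hz1 hF1 h1l
  have hM1u : Mk n ⌊(n:ℝ)^ρ₁⌋₊ ω ≤ (b1 * Real.log n)^(1/γ) :=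
    Mk_le_of_count _ _ _ _ _ hF1 h1u
  have hM2u : Mk n ⌊(n:ℝ)^ρ₂⌋₊ ω ≤ (b2 * Real.log n)^(1/γ) :=
    Mk_le_of_count _ _ _ _ _ hF2 h2u
  have hs0 : (a0 * Real.log n)^(1/γ) = a0^(1/γ) * (Real.log n)^(1/γ) :=
    Real.mul_rpow ha0.le hL
  have hs1 : (a1 * Real.log n)^(1/γ) = a1^(1/γ) * (Real.log n)^(1/γ) :=
    Real.mul_rpow ha1.le hL
  have ht1 : (b1 * Real.log n)^(1/γ) = b1^(1/γ) * (Real.log n)^(1/γ) :=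
    Real.mul_rpow hb1.le hL
  have ht2 : (b2 * Real.log n)^(1/γ) = b2^(1/γ) * (Real.log n)^(1/γ) :=
    Real.mul_rpow hb2.le hL
  have hLnn : 0 ≤ (Real.log n)^(1/γ) := Real.rpow_nonneg hL _
  rw [hs0] at hM0
  rw [hs1] at hM1l
  rw [ht1] at hM1u
  rw [ht2] at hM2u
  constructor
  · have h1 := mul_le_mul_of_nonneg_right
      (min_le_left (a0^(1/γ) - b1^(1/γ)) (a1^(1/γ) - b2^(1/γ))) hLnn
    rw [← hcdef] at h1
    nlinarith
  · have h1 := mul_le_mul_of_nonneg_right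
      (min_le_right (a0^(1/γ) - b1^(1/γ)) (a1^(1/γ) - b2^(1/γ))) hLnn
    rw [← hcdef] at h1
    nlinarith
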